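/- Let p ≥ 3, x_⋆ ∈ ℝ^p with ‖x_⋆‖₂ = 1, K satisfy the kernel assumption, and δ > 0. Let G(x) = E[ l_δ((aᵀx)² − (aᵀx_⋆)²) ], where a is a standard Gaussian random vector in ℝ^p. Then: (a) x_⋆ and −x_⋆ are global minimizers of G (in particular local minima); (b) the point 0 ∈ ℝ^p is a local maximum of G. -/

import Mathlib

open MeasureTheory ProbabilityTheory
open scoped BigOperators RealInnerProductSpace Gradient

/-- The kernel assumption: `K` is a nonnegative, symmetric kernel integrating to one,
bounded, Lipschitz, positive at zero, and `x ↦ x * K x` is bounded, Lipschitz and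
absolutely integrable. -/
structure IsGoodKernel (K : ℝ → ℝ) : Prop where
  nonneg : ∀ x, 0 ≤ K x
  symm : ∀ x, K x = K (-x)
  integral_one : (∫ x, K x) = 1
  bounded : ∃ B, ∀ x, |K x| ≤ B
  lipschitz : ∃ L : NNReal, LipschitzWith L K
  pos_at_zero : 0 < K 0
  bar_bounded : ∃ B, ∀ x, |x * K x| ≤ B
  bar_lipschitz : ∃ L : NNReal, LipschitzWith L (fun x => x * K x)
  bar_integrable : Integrable (fun x => x * K x)

/-- The scaled kernel `K_δ(x) = (1/δ) K(x/δ)`. -/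
noncomputable def scaledKernel (K : ℝ → ℝ) (δ : ℝ) (x : ℝ) : ℝ := (1 / δ) * K (x / δ)

/-- The convolution-type smoothed loss `l_δ(x) = ∫ |y| K_δ(x - y) dy`. -/
noncomputable def smoothedLoss (K : ℝ → ℝ) (δ : ℝ) (x : ℝ) : ℝ :=
  ∫ y, |y| * scaledKernel K δ (x - y)

/-- The smoothed empirical objective
`F_δ(x) = (1/n) ∑ᵢ l_δ((aᵢᵀ x)² - bᵢ)`. -/
noncomputable def smoothedObj {p n : ℕ} (K : ℝ → ℝ) (δ : ℝ)
    (a : Fin n → EuclideanSpace ℝ (Fin p)) (b : Fin n → ℝ)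
    (x : EuclideanSpace ℝ (Fin p)) : ℝ :=
  (n : ℝ)⁻¹ * ∑ i, smoothedLoss K δ ((⟪a i, x⟫) ^ 2 - b i)

/-- `Δ(x) = min(‖x - x⋆‖, ‖x + x⋆‖)`, the distance to the pair of true signals. -/
noncomputable def distSig {p : ℕ} (xs x : EuclideanSpace ℝ (Fin p)) : ℝ :=
  min ‖x - xs‖ ‖x + xs‖

/-- The standard Gaussian measure `N(0, I_p)` on `EuclideanSpace ℝ (Fin p)`. -/
noncomputable def stdGaussian (p : ℕ) : Measure (EuclideanSpace ℝ (Fin p)) :=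
  Measure.map (MeasurableEquiv.toLp 2 (Fin p → ℝ))
    (Measure.pi fun _ => gaussianReal 0 1)

/-- `a` is a family of i.i.d. standard Gaussian random vectors in `ℝ^p`. -/
def IsIIDStdGaussian {Ω : Type*} [MeasurableSpace Ω] (P : Measure Ω) {p : ℕ} {ι : Type*}
    (a : ι → Ω → EuclideanSpace ℝ (Fin p)) : Prop :=
  (∀ i, Measurable (a i)) ∧
  iIndepFun a P ∧
  (∀ i, Measure.map (a i) P = stdGaussian p)


/-- The population objective `G(x) = E[l_δ((aᵀx)² - (aᵀx⋆)²)]`, `a ~ N(0, I_p)`. -/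
noncomputable def popObj {p : ℕ} (K : ℝ → ℝ) (δ : ℝ)
    (xs x : EuclideanSpace ℝ (Fin p)) : ℝ :=
  ∫ v, smoothedLoss K δ ((⟪v, x⟫) ^ 2 - (⟪v, xs⟫) ^ 2) ∂(stdGaussian p)


namespace PopLocalMax
open Real

variable {K : ℝ → ℝ} {δ : ℝ}

/-- `Lf K δ s = ∫ |s - δ u| K(u) du`, an equivalent form of the smoothed loss. -/
noncomputable def Lf (K : ℝ → ℝ) (δ : ℝ) (s : ℝ) : ℝ := ∫ u, |s - δ * u| * K u

/-- The gap constant `c₀ = ∫ (1-|δu|)⁺ K(u) du`. -/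
noncomputable def c0 (K : ℝ → ℝ) (δ : ℝ) : ℝ := ∫ u, max (1 - |δ * u|) 0 * K u

theorem integrableK (hK : IsGoodKernel K) : Integrable K := by
  by_contra h
  have h0 := integral_undef h
  rw [hK.integral_one] at h0
  exact one_ne_zero h0

theorem contK (hK : IsGoodKernel K) : Continuous K :=
  hK.lipschitz.choose_spec.continuous

theorem integrable_abs_mul_K (hK : IsGoodKernel K) :
    Integrable (fun u => |u| * K u) := by
  refine hK.bar_integrable.abs.congr (Filter.Eventually.of_forall fun u => ?_)
  show |u * K u| = |u| * K u
  rw [abs_mul, abs_of_nonneg (hK.nonneg u)]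

theorem integrable_Lf_integrand (hK : IsGoodKernel K) (s : ℝ) :
    Integrable (fun u => |s - δ * u| * K u) := by
  have hcont : Continuous fun u : ℝ => |s - δ * u| * K u :=
    ((continuous_const.sub (continuous_const.mul continuous_id)).abs).mul (contK hK)
  refine Integrable.mono' (((integrableK hK).const_mul |s|).add
    ((integrable_abs_mul_K hK).const_mul |δ|)) hcont.aestronglyMeasurable
    (Filter.Eventually.of_forall fun u => ?_)
  have h1 : |s - δ * u| ≤ |s| + |δ| * |u| := by
    calc |s - δ * u| = |s + -(δ * u)| := by ring_nf
    _ ≤ |s| + |-(δ * u)| := abs_add_le _ _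
    _ = |s| + |δ| * |u| := by rw [abs_neg, abs_mul]
  have hKu := hK.nonneg u
  have habs : ‖|s - δ * u| * K u‖ = |s - δ * u| * K u := by
    rw [Real.norm_eq_abs, abs_mul, abs_abs, abs_of_nonneg hKu]
  rw [habs]
  calc |s - δ * u| * K u ≤ (|s| + |δ| * |u|) * K u :=
        mul_le_mul_of_nonneg_right h1 hKu
  _ = |s| * K u + |δ| * (|u| * K u) := by ring

theorem Lf_nonneg (hK : IsGoodKernel K) (s : ℝ) : 0 ≤ Lf K δ s :=
  integral_nonneg fun u => mul_nonneg (abs_nonneg _) (hK.nonneg u)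

theorem Lf_neg (hK : IsGoodKernel K) (s : ℝ) : Lf K δ (-s) = Lf K δ s := by
  have h1 : ∀ u : ℝ, |(-s) - δ * (-u)| * K (-u) = |s - δ * u| * K u := by
    intro u
    rw [← hK.symm u]
    congr 1
    have e : (-s) - δ * (-u) = -(s - δ * u) := by ring
    rw [e, abs_neg]
  calc Lf K δ (-s) = ∫ u, |(-s) - δ * u| * K u := rfl
  _ = ∫ u, |(-s) - δ * (-u)| * K (-u) := (integral_neg_eq_self (fun u => |(-s) - δ * u| * K u) volume).symm
  _ = ∫ u, |s - δ * u| * K u := by simp_rw [h1]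

theorem Lf_le_add (hK : IsGoodKernel K) (a b : ℝ) :
    Lf K δ a ≤ Lf K δ b + |a - b| := by
  have hint2 := integrable_Lf_integrand (δ := δ) hK b
  have h : Lf K δ a ≤ ∫ u, (|b - δ * u| * K u + |a - b| * K u) := by
    refine integral_mono (integrable_Lf_integrand hK a)
      (hint2.add ((integrableK hK).const_mul _)) fun u => ?_
    have h1 : |a - δ * u| ≤ |b - δ * u| + |a - b| := by
      calc |a - δ * u| = |(b - δ * u) + (a - b)| := by congr 1; ring
      _ ≤ |b - δ * u| + |a - b| := abs_add_le _ _
    calc |a - δ * u| * K u ≤ (|b - δ * u| + |a - b|) * K u :=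
          mul_le_mul_of_nonneg_right h1 (hK.nonneg u)
    _ = |b - δ * u| * K u + |a - b| * K u := by ring
  rwa [integral_add hint2 ((integrableK hK).const_mul _), integral_const_mul _ _,
    hK.integral_one, mul_one] at h

theorem lipschitzWith_Lf (hK : IsGoodKernel K) : LipschitzWith 1 (Lf K δ) := by
  refine LipschitzWith.of_dist_le_mul fun a b => ?_
  rw [Real.dist_eq, Real.dist_eq, NNReal.coe_one, one_mul]
  have h1 := Lf_le_add (δ := δ) hK a b
  have h2 := Lf_le_add (δ := δ) hK b a
  rw [abs_sub_comm b a] at h2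
  rw [abs_le]
  constructor <;> linarith

theorem continuous_Lf (hK : IsGoodKernel K) : Continuous (Lf K δ) :=
  (lipschitzWith_Lf hK).continuous

theorem Lf_convex (hK : IsGoodKernel K) {a b lam mu : ℝ}
    (hl : 0 ≤ lam) (hm : 0 ≤ mu) (hlm : lam + mu = 1) :
    Lf K δ (lam * a + mu * b) ≤ lam * Lf K δ a + mu * Lf K δ b := by
  have hint1 := integrable_Lf_integrand (δ := δ) hK a
  have hint2 := integrable_Lf_integrand (δ := δ) hK b
  have h : Lf K δ (lam * a + mu * b)
      ≤ ∫ u, (lam * (|a - δ * u| * K u) + mu * (|b - δ * u| * K u)) := by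
    refine integral_mono (integrable_Lf_integrand hK _)
      ((hint1.const_mul _).add (hint2.const_mul _)) fun u => ?_
    have he : lam * a + mu * b - δ * u = lam * (a - δ * u) + mu * (b - δ * u) := by
      linear_combination (δ * u) * hlm
    have key : |lam * a + mu * b - δ * u| ≤ lam * |a - δ * u| + mu * |b - δ * u| := by
      calc |lam * a + mu * b - δ * u| = |lam * (a - δ * u) + mu * (b - δ * u)| := by rw [he]
      _ ≤ |lam * (a - δ * u)| + |mu * (b - δ * u)| := abs_add_le _ _
      _ = lam * |a - δ * u| + mu * |b - δ * u| := by
          rw [abs_mul, abs_mul, abs_of_nonneg hl, abs_of_nonneg hm]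
    calc |lam * a + mu * b - δ * u| * K u
        ≤ (lam * |a - δ * u| + mu * |b - δ * u|) * K u :=
          mul_le_mul_of_nonneg_right key (hK.nonneg u)
    _ = lam * (|a - δ * u| * K u) + mu * (|b - δ * u| * K u) := by ring
  rwa [integral_add (hint1.const_mul _) (hint2.const_mul _), integral_const_mul _ _,
    integral_const_mul _ _] at h

theorem Lf_zero_le (hK : IsGoodKernel K) (s : ℝ) : Lf K δ 0 ≤ Lf K δ s := by
  have hint1 := integrable_Lf_integrand (δ := δ) hK s
  have hint2 := integrable_Lf_integrand (δ := δ) hK (-s)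
  have key : ∫ u, 2 * (|0 - δ * u| * K u)
      ≤ ∫ u, (|s - δ * u| * K u + |(-s) - δ * u| * K u) := by
    refine integral_mono ((integrable_Lf_integrand hK 0).const_mul 2)
      (hint1.add hint2) fun u => ?_
    have h0 := abs_add_le (δ * u - s) (δ * u + s)
    have e : δ * u - s + (δ * u + s) = 2 * (δ * u) := by ring
    rw [e, abs_mul] at h0
    have e2 : |(2:ℝ)| = 2 := by norm_num
    rw [e2] at h0
    have ea : |0 - δ * u| = |δ * u| := by rw [zero_sub, abs_neg]
    have eb : |s - δ * u| = |δ * u - s| := abs_sub_comm _ _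
    have ec : |(-s) - δ * u| = |δ * u + s| := by
      have : (-s) - δ * u = -(δ * u + s) := by ring
      rw [this, abs_neg]
    have h1 : 2 * |0 - δ * u| ≤ |s - δ * u| + |(-s) - δ * u| := by
      rw [ea, eb, ec]; linarith
    calc 2 * (|0 - δ * u| * K u) = (2 * |0 - δ * u|) * K u := by ring
    _ ≤ (|s - δ * u| + |(-s) - δ * u|) * K u :=
        mul_le_mul_of_nonneg_right h1 (hK.nonneg u)
    _ = |s - δ * u| * K u + |(-s) - δ * u| * K u := by ring
  rw [integral_const_mul _ _, integral_add hint1 hint2] at key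
  have hn : (∫ u, |(-s) - δ * u| * K u) = Lf K δ s := Lf_neg hK s
  have h1 : (∫ u, |0 - δ * u| * K u) = Lf K δ 0 := rfl
  have h2 : (∫ u, |s - δ * u| * K u) = Lf K δ s := rfl
  rw [h1, h2, hn] at key
  linarith

theorem Lf_mono (hK : IsGoodKernel K) {a b : ℝ} (ha : 0 ≤ a) (hab : a ≤ b) :
    Lf K δ a ≤ Lf K δ b := by
  have hia := integrable_Lf_integrand (δ := δ) hK a
  have hina := integrable_Lf_integrand (δ := δ) hK (-a)
  have hib := integrable_Lf_integrand (δ := δ) hK b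
  have hinb := integrable_Lf_integrand (δ := δ) hK (-b)
  have key : ∫ u, (|a - δ * u| * K u + |(-a) - δ * u| * K u)
      ≤ ∫ u, (|b - δ * u| * K u + |(-b) - δ * u| * K u) := by
    refine integral_mono (hia.add hina) (hib.add hinb) fun u => ?_
    have h1 : |a - δ * u| + |(-a) - δ * u| ≤ |b - δ * u| + |(-b) - δ * u| := by
      rcases abs_cases (a - δ * u) with ⟨e1, f1⟩ | ⟨e1, f1⟩ <;>
      rcases abs_cases ((-a) - δ * u) with ⟨e2, f2⟩ | ⟨e2, f2⟩ <;>
      rcases abs_cases (b - δ * u) with ⟨e3, f3⟩ | ⟨e3, f3⟩ <;>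
      rcases abs_cases ((-b) - δ * u) with ⟨e4, f4⟩ | ⟨e4, f4⟩ <;>
      rw [e1, e2, e3, e4] <;> linarith
    calc |a - δ * u| * K u + |(-a) - δ * u| * K u
        = (|a - δ * u| + |(-a) - δ * u|) * K u := by ring
    _ ≤ (|b - δ * u| + |(-b) - δ * u|) * K u :=
        mul_le_mul_of_nonneg_right h1 (hK.nonneg u)
    _ = |b - δ * u| * K u + |(-b) - δ * u| * K u := by ring
  rw [integral_add hia hina, integral_add hib hinb] at key
  have h1 : (∫ u, |(-a) - δ * u| * K u) = Lf K δ a := Lf_neg hK a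
  have h2 : (∫ u, |(-b) - δ * u| * K u) = Lf K δ b := Lf_neg hK b
  have h3 : (∫ u, |a - δ * u| * K u) = Lf K δ a := rfl
  have h4 : (∫ u, |b - δ * u| * K u) = Lf K δ b := rfl
  rw [h1, h2, h3, h4] at key
  linarith

theorem pt_id (w : ℝ) :
    |1 - w| + |(-1) - w| - 2 * |0 - w| = 2 * max (1 - |w|) 0 := by
  have h0 : |0 - w| = |w| := by rw [zero_sub, abs_neg]
  rw [h0]
  rcases abs_cases w with ⟨e1, f1⟩ | ⟨e1, f1⟩ <;>
  rcases abs_cases (1 - w) with ⟨e2, f2⟩ | ⟨e2, f2⟩ <;>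
  rcases abs_cases ((-1) - w) with ⟨e3, f3⟩ | ⟨e3, f3⟩ <;>
  rcases max_cases (1 - |w|) (0:ℝ) with ⟨e4, f4⟩ | ⟨e4, f4⟩ <;>
  rw [e2, e3, e4] <;> linarith

theorem integrable_c0_integrand (hK : IsGoodKernel K) :
    Integrable (fun u => max (1 - |δ * u|) 0 * K u) := by
  have hcont : Continuous fun u : ℝ => max (1 - |δ * u|) 0 * K u := by
    refine Continuous.mul ?_ (contK hK)
    exact (continuous_const.sub (continuous_const.mul continuous_id).abs).max continuous_const
  refine Integrable.mono' (integrableK hK) hcont.aestronglyMeasurable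
    (Filter.Eventually.of_forall fun u => ?_)
  have h1 : max (1 - |δ * u|) 0 ≤ 1 := by
    refine max_le ?_ zero_le_one
    have := abs_nonneg (δ * u); linarith
  have h2 : (0:ℝ) ≤ max (1 - |δ * u|) 0 := le_max_right _ _
  have hKu := hK.nonneg u
  rw [Real.norm_eq_abs, abs_of_nonneg (mul_nonneg h2 hKu)]
  nlinarith

theorem c0_eq (hK : IsGoodKernel K) : c0 K δ = Lf K δ 1 - Lf K δ 0 := by
  have h1 := integrable_Lf_integrand (δ := δ) hK 1
  have h2 := integrable_Lf_integrand (δ := δ) hK (-1)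
  have h3 := integrable_Lf_integrand (δ := δ) hK 0
  have h1' : Integrable (fun u => (1/2 : ℝ) * (|1 - δ * u| * K u)) := h1.const_mul _
  have h2' : Integrable (fun u => (1/2 : ℝ) * (|(-1) - δ * u| * K u)) := h2.const_mul _
  have e : ∀ u : ℝ, max (1 - |δ * u|) 0 * K u
      = (1/2) * (|1 - δ * u| * K u) + (1/2) * (|(-1) - δ * u| * K u) - |0 - δ * u| * K u := by
    intro u
    have h := pt_id (δ * u)
    have hm : max (1 - |δ * u|) 0
        = (|1 - δ * u| + |(-1) - δ * u| - 2 * |0 - δ * u|) / 2 := by linarith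
    rw [hm]; ring
  have hc : c0 K δ = ∫ u, ((1/2) * (|1 - δ * u| * K u)
      + (1/2) * (|(-1) - δ * u| * K u) - |0 - δ * u| * K u) := by
    rw [c0]; exact integral_congr_ae (Filter.Eventually.of_forall e)
  have hs : ∫ u, ((1/2) * (|1 - δ * u| * K u) + (1/2) * (|(-1) - δ * u| * K u)
        - |0 - δ * u| * K u)
      = (∫ u, ((1/2) * (|1 - δ * u| * K u) + (1/2) * (|(-1) - δ * u| * K u)))
        - ∫ u, |0 - δ * u| * K u := integral_sub (h1'.add h2') h3
  have hs2 : ∫ u, ((1/2) * (|1 - δ * u| * K u) + (1/2) * (|(-1) - δ * u| * K u))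
      = (∫ u, (1/2 : ℝ) * (|1 - δ * u| * K u))
        + ∫ u, (1/2 : ℝ) * (|(-1) - δ * u| * K u) := integral_add h1' h2'
  have hs3 : ∫ u, (1/2 : ℝ) * (|1 - δ * u| * K u)
      = (1/2) * ∫ u, |1 - δ * u| * K u := integral_const_mul _ _
  have hs4 : ∫ u, (1/2 : ℝ) * (|(-1) - δ * u| * K u)
      = (1/2) * ∫ u, |(-1) - δ * u| * K u := integral_const_mul _ _
  have hn : (∫ u, |(-1) - δ * u| * K u) = Lf K δ 1 := Lf_neg hK 1
  have ha : (∫ u, |1 - δ * u| * K u) = Lf K δ 1 := rfl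
  have hb : (∫ u, |0 - δ * u| * K u) = Lf K δ 0 := rfl
  rw [hc, hs, hs2, hs3, hs4, hn, ha, hb]
  ring

theorem c0_pos (hK : IsGoodKernel K) (hδ : 0 < δ) : 0 < c0 K δ := by
  have hnn : (0 : ℝ → ℝ) ≤ fun u => max (1 - |δ * u|) 0 * K u :=
    fun u => mul_nonneg (le_max_right _ _) (hK.nonneg u)
  rw [c0, integral_pos_iff_support_of_nonneg hnn (integrable_c0_integrand hK)]
  have hU : IsOpen {u : ℝ | |δ * u| < 1 ∧ 0 < K u} := by
    refine IsOpen.inter ?_ ?_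
    · exact isOpen_lt (continuous_const.mul continuous_id).abs continuous_const
    · exact isOpen_lt continuous_const (contK hK)
  have hsub : {u : ℝ | |δ * u| < 1 ∧ 0 < K u} ⊆
      Function.support fun u => max (1 - |δ * u|) 0 * K u := by
    intro u hu
    have h1 : 0 < max (1 - |δ * u|) 0 := lt_max_of_lt_left (by linarith [hu.1])
    exact ne_of_gt (mul_pos h1 hu.2)
  refine lt_of_lt_of_le ?_ (measure_mono hsub)
  refine hU.measure_pos volume ⟨0, ?_⟩
  constructor
  · simp
  · exact hK.pos_at_zero

theorem c0_le_one (hK : IsGoodKernel K) : c0 K δ ≤ 1 := by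
  have h : c0 K δ ≤ ∫ u, K u := by
    refine integral_mono (integrable_c0_integrand hK) (integrableK hK) fun u => ?_
    have h1 : max (1 - |δ * u|) 0 ≤ 1 := by
      refine max_le ?_ zero_le_one
      have := abs_nonneg (δ * u); linarith
    nlinarith [hK.nonneg u]
  rwa [hK.integral_one] at h

theorem key_step (hK : IsGoodKernel K) {τ s : ℝ} (h0 : 0 ≤ τ) (h1 : τ ≤ 1) (hs : 1 ≤ s) :
    Lf K δ (τ - s) ≤ Lf K δ s - τ * c0 K δ := by
  have hs0 : (0:ℝ) < s := by linarith
  have hA : Lf K δ (τ - s) ≤ (1 - τ) * Lf K δ (-s) + τ * Lf K δ (1 - s) := by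
    have h := Lf_convex (δ := δ) hK (a := -s) (b := 1 - s) (lam := 1 - τ) (mu := τ)
      (by linarith) h0 (by ring)
    have e : (1 - τ) * (-s) + τ * (1 - s) = τ - s := by ring
    rwa [e] at h
  rw [Lf_neg hK] at hA
  have hB : Lf K δ (1 - s) = Lf K δ (s - 1) := by
    have : (1 - s : ℝ) = -(s - 1) := by ring
    rw [this, Lf_neg hK]
  rw [hB] at hA
  have hC : Lf K δ 1 ≤ (1/s) * Lf K δ s + (1 - 1/s) * Lf K δ 0 := by
    have h := Lf_convex (δ := δ) hK (a := s) (b := 0) (lam := 1/s) (mu := 1 - 1/s)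
      (by positivity) (by rw [sub_nonneg]; rw [div_le_one hs0]; exact hs) (by ring)
    have e : (1/s) * s + (1 - 1/s) * 0 = 1 := by field_simp; ring
    rwa [e] at h
  have hD : Lf K δ (s - 1) ≤ (1 - 1/s) * Lf K δ s + (1/s) * Lf K δ 0 := by
    have h := Lf_convex (δ := δ) hK (a := s) (b := 0) (lam := 1 - 1/s) (mu := 1/s)
      (by rw [sub_nonneg]; rw [div_le_one hs0]; exact hs) (by positivity) (by ring)
    have e : (1 - 1/s) * s + (1/s) * 0 = s - 1 := by field_simp; ring
    rwa [e] at h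
  have hE : Lf K δ (s - 1) ≤ Lf K δ s - c0 K δ := by
    rw [c0_eq hK]
    linarith
  have hF := mul_le_mul_of_nonneg_left hE h0
  nlinarith

end PopLocalMax



namespace PopLocalMax
open Real
open scoped ENNReal NNReal

theorem lintegral_pi_prod : ∀ {n : ℕ} (f : Fin n → ℝ → ℝ≥0∞), (∀ i, Measurable (f i)) →
    ∫⁻ x : Fin n → ℝ, ∏ i, f i (x i) ∂(Measure.pi fun _ => (volume : Measure ℝ))
      = ∏ i, ∫⁻ t, f i t := by
  intro n
  induction n with
  | zero =>
      intro f _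
      simp
  | succ n ih =>
      intro f hf
      have hmp := measurePreserving_piFinSuccAbove (fun _ : Fin (n+1) => (volume : Measure ℝ)) 0
      have hmeas2 : Measurable fun y : Fin n → ℝ => ∏ i, f i.succ (y i) :=
        Finset.measurable_prod _ fun i _ => (hf i.succ).comp (measurable_pi_apply i)
      have hG : ∫⁻ z : ℝ × (Fin n → ℝ), (f 0 z.1 * ∏ i : Fin n, f i.succ (z.2 i))
            ∂((volume : Measure ℝ).prod (Measure.pi fun _ : Fin n => (volume : Measure ℝ)))
          = (∫⁻ t, f 0 t) * ∏ i : Fin n, ∫⁻ t, f i.succ t := by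
        rw [lintegral_prod_mul (hf 0).aemeasurable hmeas2.aemeasurable,
          ih _ fun i : Fin n => hf i.succ]
      have step1 : ∫⁻ x : Fin (n+1) → ℝ, ∏ i, f i (x i)
            ∂(Measure.pi fun _ => (volume : Measure ℝ))
          = ∫⁻ z : ℝ × (Fin n → ℝ), (f 0 z.1 * ∏ i : Fin n, f i.succ (z.2 i))
            ∂((volume : Measure ℝ).prod (Measure.pi fun _ : Fin n => (volume : Measure ℝ))) := by
        rw [← hmp.map_eq, lintegral_map_equiv]
        congr 1
        funext x
        rw [Fin.prod_univ_succ]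
        congr 1
      rw [step1, hG, Fin.prod_univ_succ]

theorem pi_gauss (p : ℕ) :
    (Measure.pi fun _ : Fin p => gaussianReal 0 1)
      = (volume : Measure (Fin p → ℝ)).withDensity
          (fun x => ∏ i, gaussianPDF 0 1 (x i)) := by
  refine Measure.pi_eq fun s hs => ?_
  rw [withDensity_apply _ (MeasurableSet.univ_pi hs)]
  have hind : ∀ x : Fin p → ℝ, (Set.univ.pi s).indicator
        (fun x => ∏ i, gaussianPDF 0 1 (x i)) x
      = ∏ i, (s i).indicator (gaussianPDF 0 1) (x i) := by
    intro x
    by_cases hx : x ∈ Set.univ.pi s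
    · rw [Set.indicator_of_mem hx]
      exact Finset.prod_congr rfl fun i _ =>
        (Set.indicator_of_mem (hx i (Set.mem_univ i)) _).symm
    · rw [Set.indicator_of_notMem hx]
      rw [Set.mem_univ_pi] at hx
      push_neg at hx
      obtain ⟨j, hj⟩ := hx
      exact (Finset.prod_eq_zero (Finset.mem_univ j)
        (Set.indicator_of_notMem hj _)).symm
  calc ∫⁻ x in Set.univ.pi s, ∏ i, gaussianPDF 0 1 (x i) ∂(volume : Measure (Fin p → ℝ))
      = ∫⁻ x, (Set.univ.pi s).indicator (fun x => ∏ i, gaussianPDF 0 1 (x i)) x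
          ∂(volume : Measure (Fin p → ℝ)) :=
        (lintegral_indicator (MeasurableSet.univ_pi hs) _).symm
    _ = ∫⁻ x, ∏ i, (s i).indicator (gaussianPDF 0 1) (x i)
          ∂(volume : Measure (Fin p → ℝ)) := by simp_rw [hind]
    _ = ∏ i, ∫⁻ t, (s i).indicator (gaussianPDF 0 1) t := by
        rw [volume_pi]
        exact lintegral_pi_prod _ fun i => (measurable_gaussianPDF 0 1).indicator (hs i)
    _ = ∏ i, (gaussianReal 0 1) (s i) := by
        refine Finset.prod_congr rfl fun i _ => ?_
        rw [lintegral_indicator (hs i), gaussianReal_of_var_ne_zero _ one_ne_zero,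
          withDensity_apply _ (hs i)]

theorem map_withDensity_equiv {α β : Type*} [MeasurableSpace α] [MeasurableSpace β]
    (e : α ≃ᵐ β) (μ : Measure α) (f : β → ℝ≥0∞) (hf : Measurable f) :
    Measure.map e (μ.withDensity (f ∘ e)) = (Measure.map e μ).withDensity f := by
  ext s hs
  rw [Measure.map_apply e.measurable hs, withDensity_apply _ hs,
    withDensity_apply _ (e.measurable hs), setLIntegral_map hs hf e.measurable]
  rfl

noncomputable def gaussDensity (p : ℕ) : EuclideanSpace ℝ (Fin p) → ℝ≥0∞ :=
  fun v => ENNReal.ofReal ((Real.sqrt (2 * π))⁻¹ ^ p * Real.exp (-‖v‖ ^ 2 / 2))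

theorem measurable_gaussDensity (p : ℕ) : Measurable (gaussDensity p) := by
  have hc : Continuous fun v : EuclideanSpace ℝ (Fin p) =>
      (Real.sqrt (2 * π))⁻¹ ^ p * Real.exp (-‖v‖ ^ 2 / 2) := by
    refine continuous_const.mul (Real.continuous_exp.comp ?_)
    exact ((continuous_norm.pow 2).neg).div_const 2
  exact ENNReal.measurable_ofReal.comp hc.measurable

theorem gaussDensity_comp (p : ℕ) (x : Fin p → ℝ) :
    (∏ i, gaussianPDF 0 1 (x i))
      = gaussDensity p ((MeasurableEquiv.toLp 2 (Fin p → ℝ)) x) := by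
  have hx : ∀ i : Fin p, gaussianPDF 0 1 (x i)
      = ENNReal.ofReal ((Real.sqrt (2 * π))⁻¹ * Real.exp (-(x i) ^ 2 / 2)) := by
    intro i
    show ENNReal.ofReal (gaussianPDFReal 0 1 (x i)) = _
    congr 1
    simp [gaussianPDFReal]
  simp_rw [hx]
  rw [← ENNReal.ofReal_prod_of_nonneg (fun i _ =>
    mul_nonneg (inv_nonneg.mpr (Real.sqrt_nonneg _)) (Real.exp_nonneg _))]
  unfold gaussDensity
  congr 1
  rw [Finset.prod_mul_distrib, Finset.prod_const, Finset.card_fin, ← Real.exp_sum]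
  congr 1
  have hnorm : ‖(MeasurableEquiv.toLp 2 (Fin p → ℝ)) x‖ ^ 2
      = ∑ i, (x i) ^ 2 := by
    rw [EuclideanSpace.norm_eq, Real.sq_sqrt (Finset.sum_nonneg fun i _ => sq_nonneg _)]
    refine Finset.sum_congr rfl fun i _ => ?_
    rw [Real.norm_eq_abs, sq_abs]
    rfl
  rw [hnorm, ← Finset.sum_div, Finset.sum_neg_distrib, neg_div]

theorem stdGaussian_eq (p : ℕ) :
    stdGaussian p = (volume : Measure (EuclideanSpace ℝ (Fin p))).withDensity
      (gaussDensity p) := by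
  rw [_root_.stdGaussian, pi_gauss p]
  have hcomp : (fun x : Fin p → ℝ => ∏ i, gaussianPDF 0 1 (x i))
      = (gaussDensity p) ∘ ⇑(MeasurableEquiv.toLp 2 (Fin p → ℝ)) :=
    funext (gaussDensity_comp p)
  rw [hcomp, map_withDensity_equiv ((MeasurableEquiv.toLp 2 (Fin p → ℝ)))
    volume (gaussDensity p) (measurable_gaussDensity p),
    ← MeasurableEquiv.symm_symm (MeasurableEquiv.toLp 2 (Fin p → ℝ)),
    ((EuclideanSpace.volume_preserving_symm_measurableEquiv_toLp (Fin p)).symm _).map_eq]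

theorem stdGaussian_map {p : ℕ}
    (b : OrthonormalBasis (Fin p) ℝ (EuclideanSpace ℝ (Fin p))) :
    Measure.map (⇑b.repr) (stdGaussian p) = stdGaussian p := by
  have hco : (⇑(b.repr.toHomeomorph.toMeasurableEquiv) :
      EuclideanSpace ℝ (Fin p) → EuclideanSpace ℝ (Fin p)) = ⇑b.repr := rfl
  have hD : (gaussDensity p) ∘ ⇑(b.repr.toHomeomorph.toMeasurableEquiv)
      = gaussDensity p := by
    funext v
    show gaussDensity p (b.repr v) = gaussDensity p v
    unfold gaussDensity
    rw [LinearIsometryEquiv.norm_map]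
  rw [stdGaussian_eq]
  calc Measure.map (⇑b.repr) (volume.withDensity (gaussDensity p))
      = Measure.map (⇑(b.repr.toHomeomorph.toMeasurableEquiv))
          (volume.withDensity ((gaussDensity p) ∘ ⇑(b.repr.toHomeomorph.toMeasurableEquiv))) := by
        rw [hD, hco]
    _ = (Measure.map (⇑(b.repr.toHomeomorph.toMeasurableEquiv)) volume).withDensity
          (gaussDensity p) :=
        map_withDensity_equiv _ _ _ (measurable_gaussDensity p)
    _ = volume.withDensity (gaussDensity p) := by
        rw [hco, b.measurePreserving_repr.map_eq]

theorem map_pair_pi {p : ℕ} (i j : Fin p) (hij : i ≠ j) :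
    Measure.map (fun x : Fin p → ℝ => (x i, x j))
        (Measure.pi fun _ => gaussianReal 0 1)
      = (gaussianReal 0 1).prod (gaussianReal 0 1) := by
  classical
  refine (Measure.prod_eq fun s t hs ht => ?_).symm
  rw [Measure.map_apply ((measurable_pi_apply i).prodMk (measurable_pi_apply j))
    (hs.prod ht)]
  have hpre : (fun x : Fin p → ℝ => (x i, x j)) ⁻¹' (s ×ˢ t)
      = Set.univ.pi (fun k => if k = i then s else if k = j then t else Set.univ) := by
    ext x
    simp only [Set.mem_preimage, Set.mem_prod, Set.mem_univ_pi]
    constructor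
    · rintro ⟨h1, h2⟩ k
      split_ifs with h h'
      · rwa [h]
      · rwa [h']
      · trivial
    · intro h
      constructor
      · have := h i
        rwa [if_pos rfl] at this
      · have := h j
        rw [if_neg (Ne.symm hij), if_pos rfl] at this
        exact this
  rw [hpre, Measure.pi_pi]
  have hone : ∀ k : Fin p, k ∉ ({i, j} : Finset (Fin p)) →
      (gaussianReal 0 1) ((if k = i then s else if k = j then t else Set.univ)) = 1 := by
    intro k hk
    simp only [Finset.mem_insert, Finset.mem_singleton] at hk
    push_neg at hk
    rw [if_neg hk.1, if_neg hk.2]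
    exact measure_univ
  rw [← Finset.prod_subset (Finset.subset_univ ({i, j} : Finset (Fin p)))
    (fun k _ hk => hone k hk)]
  rw [Finset.prod_pair hij]
  rw [if_pos rfl, if_neg (Ne.symm hij), if_pos rfl]

theorem map_inner_pair {p : ℕ}
    (b : OrthonormalBasis (Fin p) ℝ (EuclideanSpace ℝ (Fin p))) (i j : Fin p)
    (hij : i ≠ j) :
    Measure.map (fun v : EuclideanSpace ℝ (Fin p) => ((⟪v, b i⟫ : ℝ), (⟪v, b j⟫ : ℝ)))
        (stdGaussian p)
      = (gaussianReal 0 1).prod (gaussianReal 0 1) := by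
  have h1 : (fun v : EuclideanSpace ℝ (Fin p) => ((⟪v, b i⟫ : ℝ), (⟪v, b j⟫ : ℝ)))
      = (fun w : EuclideanSpace ℝ (Fin p) => (w i, w j)) ∘ ⇑b.repr := by
    funext v
    have e1 : (⟪v, b i⟫ : ℝ) = b.repr v i := by
      rw [OrthonormalBasis.repr_apply_apply, real_inner_comm]
    have e2 : (⟪v, b j⟫ : ℝ) = b.repr v j := by
      rw [OrthonormalBasis.repr_apply_apply, real_inner_comm]
    rw [e1, e2]
    rfl
  have hmi : Measurable fun w : EuclideanSpace ℝ (Fin p) => w i :=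
    (measurable_pi_apply i).comp (MeasurableEquiv.toLp 2 (Fin p → ℝ)).symm.measurable
  have hmj : Measurable fun w : EuclideanSpace ℝ (Fin p) => w j :=
    (measurable_pi_apply j).comp (MeasurableEquiv.toLp 2 (Fin p → ℝ)).symm.measurable
  have hmeas_pair : Measurable fun w : EuclideanSpace ℝ (Fin p) => (w i, w j) :=
    hmi.prodMk hmj
  rw [h1, ← Measure.map_map hmeas_pair b.repr.continuous.measurable,
    stdGaussian_map b, _root_.stdGaussian, Measure.map_map hmeas_pair
    (MeasurableEquiv.toLp 2 (Fin p → ℝ)).measurable]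
  have h2 : (fun w : EuclideanSpace ℝ (Fin p) => (w i, w j))
      ∘ ⇑(MeasurableEquiv.toLp 2 (Fin p → ℝ))
      = fun x : Fin p → ℝ => (x i, x j) := rfl
  rw [h2, map_pair_pi i j hij]

end PopLocalMax



namespace PopLocalMax
open Real
open scoped ENNReal NNReal

variable {K : ℝ → ℝ} {δ : ℝ}

theorem smoothedLoss_eq (hK : IsGoodKernel K) (hδ : 0 < δ) (s : ℝ) :
    smoothedLoss K δ s = Lf K δ s := by
  have hδ' : δ ≠ 0 := ne_of_gt hδ
  have h1 : smoothedLoss K δ s = ∫ y, |s - y| * ((1/δ) * K (y / δ)) := by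
    rw [smoothedLoss]
    have hsub := integral_sub_left_eq_self
      (fun y => |s - y| * ((1/δ) * K (y / δ))) volume s
    rw [← hsub]
    refine integral_congr_ae (Filter.Eventually.of_forall fun y => ?_)
    show |y| * scaledKernel K δ (s - y) = |s - (s - y)| * ((1/δ) * K ((s - y) / δ))
    rw [sub_sub_cancel, scaledKernel]
  rw [h1]
  have h2 := Measure.integral_comp_mul_left
    (fun y => |s - y| * ((1/δ) * K (y / δ))) δ
  have h3 : ∀ u : ℝ, |s - δ * u| * ((1/δ) * K ((δ * u) / δ))
      = (1/δ) * (|s - δ * u| * K u) := by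
    intro u
    rw [mul_div_cancel_left₀ _ hδ']
    ring
  simp_rw [h3] at h2
  rw [integral_const_mul _ _] at h2
  have habs : |δ⁻¹| = 1/δ := by
    rw [abs_of_pos (inv_pos.mpr hδ), one_div]
  rw [habs, smul_eq_mul] at h2
  have := mul_left_cancel₀ (one_div_ne_zero hδ') h2
  rw [← this]
  rfl

theorem isProb_stdGaussian (p : ℕ) : IsProbabilityMeasure (stdGaussian p) := by
  rw [_root_.stdGaussian]
  exact Measure.isProbabilityMeasure_map
    (MeasurableEquiv.toLp 2 (Fin p → ℝ)).measurable.aemeasurable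

theorem gm_density (s : Set ℝ) (hs : MeasurableSet s) :
    gaussianReal 0 1 s = ∫⁻ x in s, gaussianPDF 0 1 x := by
  rw [gaussianReal_of_var_ne_zero _ one_ne_zero, withDensity_apply _ hs]

theorem integrable_sq_gauss : Integrable (fun x : ℝ => x ^ 2) (gaussianReal 0 1) := by
  rw [gaussianReal_of_var_ne_zero _ one_ne_zero,
    integrable_withDensity_iff (measurable_gaussianPDF 0 1)
      (Filter.Eventually.of_forall fun x => ENNReal.ofReal_lt_top)]
  have h2' : Integrable (fun x : ℝ => (x ^ (2:ℕ)) * Real.exp (-(1/2 : ℝ) * x ^ 2)) := by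
    have h2 : Integrable (fun x : ℝ => (x ^ (2:ℝ)) * Real.exp (-(1/2 : ℝ) * x ^ 2)) :=
      integrable_rpow_mul_exp_neg_mul_sq (by norm_num) (by norm_num)
    refine h2.congr (Filter.Eventually.of_forall fun x => ?_)
    show x ^ (2:ℝ) * Real.exp (-(1/2:ℝ) * x ^ 2) = x ^ (2:ℕ) * Real.exp (-(1/2:ℝ) * x ^ 2)
    rw [show ((2:ℝ)) = ((2:ℕ):ℝ) by norm_num, Real.rpow_natCast]
  refine (h2'.const_mul ((Real.sqrt (2 * π))⁻¹)).congr
    (Filter.Eventually.of_forall fun x => ?_)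
  have ht : (gaussianPDF 0 1 x).toReal = gaussianPDFReal 0 1 x :=
    ENNReal.toReal_ofReal (gaussianPDFReal_nonneg 0 1 x)
  show (Real.sqrt (2 * π))⁻¹ * (x ^ (2:ℕ) * Real.exp (-(1/2:ℝ) * x ^ 2))
      = x ^ 2 * (gaussianPDF 0 1 x).toReal
  rw [ht]
  simp only [gaussianPDFReal, NNReal.coe_one, mul_one, sub_zero]
  rw [show (-(1/2:ℝ) * x ^ 2) = -x^2/2 by ring]
  ring

theorem integrable_id_gauss : Integrable (fun x : ℝ => x) (gaussianReal 0 1) := by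
  have hb : Integrable (fun x : ℝ => 1 + x ^ 2) (gaussianReal 0 1) :=
    ((integrable_const (1:ℝ)).add integrable_sq_gauss).congr
      (Filter.Eventually.of_forall fun x => rfl)
  refine Integrable.mono' hb measurable_id.aestronglyMeasurable
    (Filter.Eventually.of_forall fun x => ?_)
  rw [Real.norm_eq_abs]
  nlinarith [sq_abs x, sq_nonneg (|x| - 1), abs_nonneg x]

theorem integral_id_gauss : (∫ x, x ∂gaussianReal 0 1) = 0 := by
  have hmap : Measure.map (fun x : ℝ => (-1) * x) (gaussianReal 0 1)
      = gaussianReal 0 1 := by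
    rw [gaussianReal_map_const_mul (-1)]
    norm_num
  have h1 : (∫ x, x ∂gaussianReal 0 1)
      = ∫ x, x ∂(Measure.map (fun x : ℝ => (-1) * x) (gaussianReal 0 1)) := by
    rw [hmap]
  rw [integral_map (φ := fun x : ℝ => (-1) * x) (by fun_prop)
    (f := fun x : ℝ => x) measurable_id.aestronglyMeasurable] at h1
  simp only [neg_one_mul] at h1
  rw [integral_neg] at h1
  linarith

/-- The set `{x | 1 ≤ x²}` used for the gain estimate. -/
def Sset : Set ℝ := {x : ℝ | 1 ≤ x ^ 2}

theorem measurableSet_Sset : MeasurableSet Sset :=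
  (isClosed_le continuous_const (continuous_pow 2)).measurableSet

theorem gauss_Sset_pos : 0 < (gaussianReal 0 1 Sset).toReal := by
  have hmsub : Set.Icc (1:ℝ) 2 ⊆ Sset := by
    intro x hx
    have h1 := hx.1
    show (1:ℝ) ≤ x ^ 2
    nlinarith
  have hpos : (0:ℝ≥0∞) < gaussianReal 0 1 (Set.Icc (1:ℝ) 2) := by
    rw [gm_density _ measurableSet_Icc]
    have hlow : ∀ x ∈ Set.Icc (1:ℝ) 2, gaussianPDF 0 1 2 ≤ gaussianPDF 0 1 x := by
      intro x hx
      apply ENNReal.ofReal_le_ofReal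
      simp only [gaussianPDFReal, NNReal.coe_one, mul_one, sub_zero]
      refine mul_le_mul_of_nonneg_left ?_ (inv_nonneg.mpr (Real.sqrt_nonneg _))
      apply Real.exp_le_exp.2
      have h1 := hx.1
      have h2 := hx.2
      nlinarith
    calc (0:ℝ≥0∞) < gaussianPDF 0 1 2 * volume (Set.Icc (1:ℝ) 2) := by
          refine ENNReal.mul_pos (gaussianPDF_pos _ one_ne_zero _).ne' ?_
          rw [Real.volume_Icc]
          norm_num
    _ = ∫⁻ _ in Set.Icc (1:ℝ) 2, gaussianPDF 0 1 2 ∂volume := by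
          rw [setLIntegral_const]
    _ ≤ ∫⁻ x in Set.Icc (1:ℝ) 2, gaussianPDF 0 1 x ∂volume := by
          refine setLIntegral_mono (measurable_gaussianPDF 0 1) hlow
  have hset : (0:ℝ≥0∞) < gaussianReal 0 1 Sset :=
    lt_of_lt_of_le hpos (measure_mono hmsub)
  exact ENNReal.toReal_pos hset.ne' (measure_ne_top _ _)

theorem gauss_Sset_le_one : (gaussianReal 0 1 Sset).toReal ≤ 1 := by
  have h := prob_le_one (μ := gaussianReal 0 1) (s := Sset)
  calc (gaussianReal 0 1 Sset).toReal ≤ (1 : ℝ≥0∞).toReal :=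
    ENNReal.toReal_mono ENNReal.one_ne_top h
  _ = 1 := by simp

theorem gauss_singleton_zero : gaussianReal 0 1 ({0} : Set ℝ) = 0 := by
  rw [gm_density _ (measurableSet_singleton 0)]
  rw [Measure.restrict_eq_zero.mpr (by simp)]
  exact lintegral_zero_measure _

theorem ae_fst_ne_zero :
    ∀ᵐ z : ℝ × ℝ ∂((gaussianReal 0 1).prod (gaussianReal 0 1)), z.1 ≠ 0 := by
  have hz : ((gaussianReal 0 1).prod (gaussianReal 0 1)) {z : ℝ × ℝ | z.1 = 0} = 0 := by
    have he : {z : ℝ × ℝ | z.1 = 0} = ({0} : Set ℝ) ×ˢ (Set.univ : Set ℝ) := by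
      ext z
      simp only [Set.mem_setOf_eq, Set.mem_prod, Set.mem_singleton_iff, Set.mem_univ,
        and_true]
    rw [he, Measure.prod_prod, gauss_singleton_zero, zero_mul]
  refine ae_iff.2 ?_
  simpa using hz

end PopLocalMax



namespace PopLocalMax
open Real
open scoped ENNReal NNReal

variable {K : ℝ → ℝ} {δ : ℝ}

theorem exists_decomp {p : ℕ} (i j : Fin p) (hij : i ≠ j)
    (xs : EuclideanSpace ℝ (Fin p)) (hxs : ‖xs‖ = 1) (x : EuclideanSpace ℝ (Fin p)) :
    ∃ (b : OrthonormalBasis (Fin p) ℝ (EuclideanSpace ℝ (Fin p))) (α β : ℝ),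
      b i = xs ∧ x = α • b i + β • b j ∧ α ^ 2 + β ^ 2 = ‖x‖ ^ 2 := by
  classical
  have hcard : Module.finrank ℝ (EuclideanSpace ℝ (Fin p)) = Fintype.card (Fin p) := by
    rw [finrank_euclideanSpace_fin, Fintype.card_fin]
  set α := (⟪x, xs⟫ : ℝ) with hα
  set y := x - α • xs with hy
  have hxsxs : (⟪xs, xs⟫ : ℝ) = 1 := by
    rw [real_inner_self_eq_norm_sq, hxs]
    norm_num
  have hxy : (⟪xs, y⟫ : ℝ) = 0 := by
    rw [hy, inner_sub_right, real_inner_smul_right, hxsxs]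
    have hc : (⟪xs, x⟫ : ℝ) = α := by rw [hα, real_inner_comm]
    rw [hc]
    ring
  by_cases hy0 : y = 0
  · have hON : Orthonormal ℝ (Set.restrict {i} (fun _ : Fin p => xs)) := by
      constructor
      · rintro ⟨k, hk⟩
        exact hxs
      · rintro ⟨k, hk⟩ ⟨l, hl⟩ hne
        exfalso
        apply hne
        apply Subtype.ext
        rw [Set.mem_singleton_iff] at hk hl
        exact hk.trans hl.symm
    obtain ⟨b, hb⟩ := hON.exists_orthonormalBasis_extension_of_card_eq hcard
    have hbi : b i = xs := hb i rfl
    have hxeq : x = α • xs := by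
      rw [hy] at hy0
      have := sub_eq_zero.mp hy0
      exact this
    refine ⟨b, α, 0, hbi, ?_, ?_⟩
    · rw [hbi, zero_smul, add_zero]
      exact hxeq
    · have hnx : ‖x‖ = |α| := by
        rw [hxeq, norm_smul, hxs, mul_one, Real.norm_eq_abs]
      rw [hnx, sq_abs]
      ring
  · set β := ‖y‖ with hβ
    have hβ0 : β ≠ 0 := by
      rw [hβ]
      exact norm_ne_zero_iff.mpr hy0
    set e2 := β⁻¹ • y with he2
    have he2n : ‖e2‖ = 1 := by
      rw [he2, norm_smul, Real.norm_eq_abs, abs_inv, abs_of_nonneg (norm_nonneg y), ← hβ]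
      field_simp
    have hxse2 : (⟪xs, e2⟫ : ℝ) = 0 := by
      rw [he2, real_inner_smul_right, hxy, mul_zero]
    set v : Fin p → EuclideanSpace ℝ (Fin p) := fun k => if k = i then xs else e2 with hv
    have hvi : v i = xs := by rw [hv]; simp
    have hvj : v j = e2 := by rw [hv]; simp [Ne.symm hij]
    have hON : Orthonormal ℝ (Set.restrict {i, j} v) := by
      constructor
      · rintro ⟨k, hk⟩
        show ‖v k‖ = 1
        rw [hv]
        dsimp only
        split_ifs
        · exact hxs
        · exact he2n
      · rintro ⟨k, hk⟩ ⟨l, hl⟩ hne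
        have hkl : k ≠ l := fun h => hne (Subtype.ext h)
        show (⟪v k, v l⟫ : ℝ) = 0
        simp only [Set.mem_insert_iff, Set.mem_singleton_iff] at hk hl
        rcases hk with hk | hk <;> rcases hl with hl | hl
        · exact absurd (hk.trans hl.symm) hkl
        · rw [hk, hl, hvi, hvj]
          exact hxse2
        · rw [hk, hl, hvj, hvi, real_inner_comm]
          exact hxse2
        · exact absurd (hk.trans hl.symm) hkl
    obtain ⟨b, hb⟩ := hON.exists_orthonormalBasis_extension_of_card_eq hcard
    have hbi : b i = xs := by
      have := hb i (by simp)
      rwa [hvi] at this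
    have hbj : b j = e2 := by
      have := hb j (by simp)
      rwa [hvj] at this
    have hxd : x = α • xs + y := by
      rw [hy]
      abel
    refine ⟨b, α, β, hbi, ?_, ?_⟩
    · rw [hbi, hbj, he2, smul_smul, mul_inv_cancel₀ hβ0, one_smul]
      exact hxd
    · have hpyth := norm_add_sq_real (α • xs) y
      rw [← hxd, real_inner_smul_left, hxy, mul_zero, norm_smul, Real.norm_eq_abs,
        hxs, mul_one, sq_abs] at hpyth
      rw [hβ]
      linarith

theorem popObj_eq {p : ℕ} (hK : IsGoodKernel K) (hδ : 0 < δ)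
    (b : OrthonormalBasis (Fin p) ℝ (EuclideanSpace ℝ (Fin p))) (i j : Fin p)
    (hij : i ≠ j) (α β : ℝ) :
    popObj K δ (b i) (α • b i + β • b j)
      = ∫ z : ℝ × ℝ, Lf K δ ((α * z.1 + β * z.2) ^ 2 - z.1 ^ 2)
          ∂((gaussianReal 0 1).prod (gaussianReal 0 1)) := by
  have hF : Continuous fun z : ℝ × ℝ => Lf K δ ((α * z.1 + β * z.2) ^ 2 - z.1 ^ 2) := by
    refine (continuous_Lf hK).comp ?_
    exact (((continuous_const.mul continuous_fst).add
      (continuous_const.mul continuous_snd)).pow 2).sub (continuous_fst.pow 2)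
  have hT : Measurable fun v : EuclideanSpace ℝ (Fin p) =>
      ((⟪v, b i⟫ : ℝ), (⟪v, b j⟫ : ℝ)) := by
    have h1 : Continuous fun v : EuclideanSpace ℝ (Fin p) => (⟪v, b i⟫ : ℝ) :=
      continuous_id.inner continuous_const
    have h2 : Continuous fun v : EuclideanSpace ℝ (Fin p) => (⟪v, b j⟫ : ℝ) :=
      continuous_id.inner continuous_const
    exact (h1.prodMk h2).measurable
  calc popObj K δ (b i) (α • b i + β • b j)
      = ∫ v, Lf K δ ((α * (⟪v, b i⟫ : ℝ) + β * (⟪v, b j⟫ : ℝ)) ^ 2 - (⟪v, b i⟫ : ℝ) ^ 2)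
          ∂(stdGaussian p) := by
        rw [popObj]
        refine integral_congr_ae (Filter.Eventually.of_forall fun v => ?_)
        show smoothedLoss K δ ((⟪v, α • b i + β • b j⟫ : ℝ) ^ 2 - (⟪v, b i⟫ : ℝ) ^ 2)
            = Lf K δ ((α * (⟪v, b i⟫ : ℝ) + β * (⟪v, b j⟫ : ℝ)) ^ 2 - (⟪v, b i⟫ : ℝ) ^ 2)
        rw [smoothedLoss_eq hK hδ, inner_add_right, real_inner_smul_right,
          real_inner_smul_right]
    _ = ∫ z : ℝ × ℝ, Lf K δ ((α * z.1 + β * z.2) ^ 2 - z.1 ^ 2)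
          ∂((gaussianReal 0 1).prod (gaussianReal 0 1)) := by
        rw [← map_inner_pair b i j hij,
          integral_map hT.aemeasurable hF.aestronglyMeasurable]

end PopLocalMax



namespace PopLocalMax
open Real
open scoped ENNReal NNReal

variable {K : ℝ → ℝ} {δ : ℝ}

theorem integrable_t2 (α β : ℝ) :
    Integrable (fun z : ℝ × ℝ => (α * z.1 + β * z.2) ^ 2)
      ((gaussianReal 0 1).prod (gaussianReal 0 1)) := by
  have hf : Integrable (fun z : ℝ × ℝ =>
      α ^ 2 * (z.1 ^ 2 * 1) + ((2 * α * β) * (z.1 * z.2) + β ^ 2 * (1 * z.2 ^ 2)))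
      ((gaussianReal 0 1).prod (gaussianReal 0 1)) :=
    ((integrable_sq_gauss.mul_prod (integrable_const 1)).const_mul _).add
      (((integrable_id_gauss.mul_prod integrable_id_gauss).const_mul _).add
        (((integrable_const 1).mul_prod integrable_sq_gauss).const_mul _))
  refine hf.congr (Filter.Eventually.of_forall fun z => ?_)
  show α ^ 2 * (z.1 ^ 2 * 1) + ((2 * α * β) * (z.1 * z.2) + β ^ 2 * (1 * z.2 ^ 2))
      = (α * z.1 + β * z.2) ^ 2
  ring

/-- `q(z) = z₁² + z₂²`. -/
def qfun (z : ℝ × ℝ) : ℝ := z.1 ^ 2 + z.2 ^ 2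

theorem qfun_nonneg (z : ℝ × ℝ) : 0 ≤ qfun z := by
  unfold qfun; positivity

theorem measurable_qfun : Measurable qfun := by
  unfold qfun; fun_prop

theorem integrable_qfun :
    Integrable qfun ((gaussianReal 0 1).prod (gaussianReal 0 1)) := by
  have hf : Integrable (fun z : ℝ × ℝ => z.1 ^ 2 * 1 + 1 * z.2 ^ 2)
      ((gaussianReal 0 1).prod (gaussianReal 0 1)) :=
    (integrable_sq_gauss.mul_prod (integrable_const 1)).add
      ((integrable_const 1).mul_prod integrable_sq_gauss)
  refine hf.congr (Filter.Eventually.of_forall fun z => ?_)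
  show z.1 ^ 2 * 1 + 1 * z.2 ^ 2 = qfun z
  unfold qfun; ring

theorem integral_one_gauss : (∫ _ : ℝ, (1:ℝ) ∂gaussianReal 0 1) = 1 := by
  simp

theorem integral_ind_one :
    (∫ x, Sset.indicator (fun _ => (1:ℝ)) x ∂gaussianReal 0 1)
      = (gaussianReal 0 1 Sset).toReal := by
  rw [integral_indicator measurableSet_Sset, setIntegral_const, smul_eq_mul, mul_one, measureReal_def]

theorem ind_sq_ge :
    (gaussianReal 0 1 Sset).toReal
      ≤ ∫ x, Sset.indicator (fun x => x ^ 2) x ∂gaussianReal 0 1 := by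
  rw [← integral_ind_one]
  refine integral_mono ((integrable_const 1).indicator measurableSet_Sset)
    (integrable_sq_gauss.indicator measurableSet_Sset) fun x => ?_
  by_cases hx : x ∈ Sset
  · rw [Set.indicator_of_mem hx, Set.indicator_of_mem hx]
    exact hx
  · rw [Set.indicator_of_notMem hx, Set.indicator_of_notMem hx]

theorem sq_ge_ind :
    (∫ x, Sset.indicator (fun x => x ^ 2) x ∂gaussianReal 0 1)
      ≤ ∫ x, x ^ 2 ∂gaussianReal 0 1 := by
  refine integral_mono (integrable_sq_gauss.indicator measurableSet_Sset)
    integrable_sq_gauss fun x => ?_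
  exact Set.indicator_le_self' (fun x _ => sq_nonneg x) x

theorem integral_ind_t2 (α β : ℝ) :
    ∫ z : ℝ × ℝ, (Sset ×ˢ (Set.univ : Set ℝ)).indicator
        (fun z => (α * z.1 + β * z.2) ^ 2) z
        ∂((gaussianReal 0 1).prod (gaussianReal 0 1))
      = α ^ 2 * (∫ x, Sset.indicator (fun x => x ^ 2) x ∂gaussianReal 0 1)
        + β ^ 2 * ((gaussianReal 0 1 Sset).toReal * ∫ x, x ^ 2 ∂gaussianReal 0 1) := by
  have hi1 : Integrable (Sset.indicator fun x : ℝ => x ^ 2) (gaussianReal 0 1) :=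
    integrable_sq_gauss.indicator measurableSet_Sset
  have hi2 : Integrable (Sset.indicator fun x : ℝ => x) (gaussianReal 0 1) :=
    integrable_id_gauss.indicator measurableSet_Sset
  have hi3 : Integrable (Sset.indicator fun _ : ℝ => (1:ℝ)) (gaussianReal 0 1) :=
    (integrable_const 1).indicator measurableSet_Sset
  have hp1 : Integrable (fun z : ℝ × ℝ =>
      α ^ 2 * (Sset.indicator (fun x => x ^ 2) z.1 * 1))
      ((gaussianReal 0 1).prod (gaussianReal 0 1)) :=
    (hi1.mul_prod (integrable_const 1)).const_mul _
  have hp2 : Integrable (fun z : ℝ × ℝ =>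
      (2 * α * β) * (Sset.indicator (fun x => x) z.1 * z.2))
      ((gaussianReal 0 1).prod (gaussianReal 0 1)) :=
    (hi2.mul_prod integrable_id_gauss).const_mul _
  have hp3 : Integrable (fun z : ℝ × ℝ =>
      β ^ 2 * (Sset.indicator (fun _ => (1:ℝ)) z.1 * z.2 ^ 2))
      ((gaussianReal 0 1).prod (gaussianReal 0 1)) :=
    (hi3.mul_prod integrable_sq_gauss).const_mul _
  have hpt : ∀ z : ℝ × ℝ, (Sset ×ˢ (Set.univ : Set ℝ)).indicator
        (fun z => (α * z.1 + β * z.2) ^ 2) z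
      = α ^ 2 * (Sset.indicator (fun x => x ^ 2) z.1 * 1)
        + ((2 * α * β) * (Sset.indicator (fun x => x) z.1 * z.2)
          + β ^ 2 * (Sset.indicator (fun _ => (1:ℝ)) z.1 * z.2 ^ 2)) := by
    intro z
    by_cases hz : z.1 ∈ Sset
    · have hz2 : z ∈ Sset ×ˢ (Set.univ : Set ℝ) := ⟨hz, Set.mem_univ _⟩
      rw [Set.indicator_of_mem hz2, Set.indicator_of_mem hz, Set.indicator_of_mem hz,
        Set.indicator_of_mem hz]
      ring
    · have hz2 : z ∉ Sset ×ˢ (Set.univ : Set ℝ) := fun h => hz h.1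
      rw [Set.indicator_of_notMem hz2, Set.indicator_of_notMem hz,
        Set.indicator_of_notMem hz, Set.indicator_of_notMem hz]
      ring
  have hp23 : Integrable (fun z : ℝ × ℝ =>
      (2 * α * β) * (Sset.indicator (fun x => x) z.1 * z.2)
        + β ^ 2 * (Sset.indicator (fun _ => (1:ℝ)) z.1 * z.2 ^ 2))
      ((gaussianReal 0 1).prod (gaussianReal 0 1)) := hp2.add hp3
  rw [integral_congr_ae (Filter.Eventually.of_forall hpt)]
  rw [integral_add hp1 hp23, integral_add hp2 hp3,
    integral_const_mul _ _, integral_const_mul _ _, integral_const_mul _ _,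
    integral_prod_mul (f := Sset.indicator fun x : ℝ => x ^ 2) (g := fun _ : ℝ => (1:ℝ)),
    integral_prod_mul (f := Sset.indicator fun x : ℝ => x) (g := fun y : ℝ => y),
    integral_prod_mul (f := Sset.indicator fun _ : ℝ => (1:ℝ)) (g := fun y : ℝ => y ^ 2),
    integral_id_gauss, integral_one_gauss, integral_ind_one]
  ring

/-- The bad set. -/
def Bset (c : ℝ) : Set (ℝ × ℝ) :=
  {z | z.1 ^ 2 < c * qfun z ∨ 1 < c * qfun z}

theorem measurableSet_Bset (c : ℝ) : MeasurableSet (Bset c) := by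
  have h1 : Measurable fun z : ℝ × ℝ => z.1 ^ 2 := by fun_prop
  have h2 : Measurable fun z : ℝ × ℝ => c * qfun z := measurable_qfun.const_mul c
  have : Bset c = {z : ℝ × ℝ | z.1 ^ 2 < c * qfun z} ∪ {z | 1 < c * qfun z} := by
    rw [Bset, Set.setOf_or]
  rw [this]
  exact (measurableSet_lt h1 h2).union (measurableSet_lt measurable_const h2)

noncomputable def Jq (c : ℝ) : ℝ :=
  ∫ z, (Bset c).indicator qfun z ∂((gaussianReal 0 1).prod (gaussianReal 0 1))

theorem integrable_ind_qfun (c : ℝ) :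
    Integrable ((Bset c).indicator qfun)
      ((gaussianReal 0 1).prod (gaussianReal 0 1)) :=
  integrable_qfun.indicator (measurableSet_Bset c)

theorem Jq_nonneg (c : ℝ) : 0 ≤ Jq c :=
  integral_nonneg (Set.indicator_nonneg fun z _ => qfun_nonneg z)

theorem Jq_mono {c c' : ℝ} (h : c ≤ c') : Jq c ≤ Jq c' := by
  refine integral_mono (integrable_ind_qfun c) (integrable_ind_qfun c') ?_
  refine Set.indicator_le_indicator_of_subset ?_ qfun_nonneg
  intro z hz
  rcases hz with hz | hz
  · exact Or.inl (lt_of_lt_of_le hz (mul_le_mul_of_nonneg_right h (qfun_nonneg z)))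
  · exact Or.inr (lt_of_lt_of_le hz (mul_le_mul_of_nonneg_right h (qfun_nonneg z)))

theorem Jq_tendsto :
    Filter.Tendsto (fun n : ℕ => Jq (1 / ((n : ℝ) + 1))) Filter.atTop (nhds 0) := by
  have hFmeas : ∀ n : ℕ, AEStronglyMeasurable
      ((Bset (1 / ((n : ℝ) + 1))).indicator qfun)
      ((gaussianReal 0 1).prod (gaussianReal 0 1)) := fun n =>
    (measurable_qfun.indicator (measurableSet_Bset _)).aestronglyMeasurable
  have hbound : ∀ n : ℕ, ∀ᵐ z ∂((gaussianReal 0 1).prod (gaussianReal 0 1)),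
      ‖(Bset (1 / ((n : ℝ) + 1))).indicator qfun z‖ ≤ qfun z := by
    intro n
    refine Filter.Eventually.of_forall fun z => ?_
    rw [Real.norm_eq_abs, abs_of_nonneg (Set.indicator_nonneg (fun z _ => qfun_nonneg z) z)]
    by_cases hz : z ∈ Bset (1 / ((n : ℝ) + 1))
    · rw [Set.indicator_of_mem hz]
    · rw [Set.indicator_of_notMem hz]; exact qfun_nonneg z
  have hlim : ∀ᵐ z ∂((gaussianReal 0 1).prod (gaussianReal 0 1)),
      Filter.Tendsto (fun n : ℕ => (Bset (1 / ((n : ℝ) + 1))).indicator qfun z)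
        Filter.atTop (nhds 0) := by
    filter_upwards [ae_fst_ne_zero] with z hz
    have hq0 : 0 < z.1 ^ 2 := by positivity
    have hev : ∀ᶠ n : ℕ in Filter.atTop,
        (Bset (1 / ((n : ℝ) + 1))).indicator qfun z = 0 := by
      obtain ⟨N, hN⟩ := exists_nat_gt (max (qfun z / z.1 ^ 2) (qfun z))
      filter_upwards [Filter.eventually_ge_atTop N] with n hn
      have hNn : (N : ℝ) ≤ (n : ℝ) := by exact_mod_cast hn
      have hn1 : (0:ℝ) < (n : ℝ) + 1 := by positivity
      have hq1 : qfun z / z.1 ^ 2 < (n : ℝ) + 1 := by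
        have := le_max_left (qfun z / z.1 ^ 2) (qfun z)
        linarith [hN]
      have hq2 : qfun z < (n : ℝ) + 1 := by
        have := le_max_right (qfun z / z.1 ^ 2) (qfun z)
        linarith [hN]
      have hkey1 : qfun z < ((n : ℝ) + 1) * z.1 ^ 2 := by
        have := (div_lt_iff₀ hq0).mp hq1
        linarith
      have hnot : z ∉ Bset (1 / ((n : ℝ) + 1)) := by
        intro hmem
        have hinv : (1 / ((n : ℝ) + 1)) * (((n : ℝ) + 1)) = 1 := by field_simp
        rcases hmem with hm | hm
        · have h2 : (1 / ((n : ℝ) + 1)) * qfun z ≤ z.1 ^ 2 := by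
            have h3 := mul_le_mul_of_nonneg_left hkey1.le
              (by positivity : (0:ℝ) ≤ 1 / ((n : ℝ) + 1))
            calc (1 / ((n : ℝ) + 1)) * qfun z
                ≤ (1 / ((n : ℝ) + 1)) * (((n : ℝ) + 1) * z.1 ^ 2) := h3
            _ = z.1 ^ 2 := by field_simp
          exact absurd hm (not_lt.mpr h2)
        · have h2 : (1 / ((n : ℝ) + 1)) * qfun z ≤ 1 := by
            have h3 := mul_le_mul_of_nonneg_left hq2.le
              (by positivity : (0:ℝ) ≤ 1 / ((n : ℝ) + 1))
            calc (1 / ((n : ℝ) + 1)) * qfun z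
                ≤ (1 / ((n : ℝ) + 1)) * (((n : ℝ) + 1)) := h3
            _ = 1 := hinv
          exact absurd hm (not_lt.mpr h2)
      exact Set.indicator_of_notMem hnot _
    exact Filter.Tendsto.congr' (hev.mono fun n h => h.symm) tendsto_const_nhds
  have h := tendsto_integral_of_dominated_convergence (μ := (gaussianReal 0 1).prod (gaussianReal 0 1))
    (F := fun n (z : ℝ × ℝ) => (Bset (1 / ((n : ℝ) + 1))).indicator qfun z)
    (f := fun _ => (0:ℝ)) qfun hFmeas integrable_qfun hbound hlim
  simpa [Jq] using h

end PopLocalMax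



namespace PopLocalMax
open Real
open scoped ENNReal NNReal

variable {K : ℝ → ℝ} {δ : ℝ}

theorem integrable_fst_sq : Integrable (fun z : ℝ × ℝ => z.1 ^ 2)
    ((gaussianReal 0 1).prod (gaussianReal 0 1)) := by
  refine (integrable_sq_gauss.mul_prod (integrable_const 1)).congr
    (Filter.Eventually.of_forall fun z => ?_)
  show z.1 ^ 2 * 1 = z.1 ^ 2
  ring

theorem integrable_Lf2 (hK : IsGoodKernel K) (α β : ℝ) :
    Integrable (fun z : ℝ × ℝ => Lf K δ ((α * z.1 + β * z.2) ^ 2 - z.1 ^ 2))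
      ((gaussianReal 0 1).prod (gaussianReal 0 1)) := by
  have hb : Integrable (fun z : ℝ × ℝ =>
      Lf K δ 0 + ((α * z.1 + β * z.2) ^ 2 + z.1 ^ 2))
      ((gaussianReal 0 1).prod (gaussianReal 0 1)) :=
    (integrable_const _).add ((integrable_t2 α β).add integrable_fst_sq)
  have hF : Continuous fun z : ℝ × ℝ => Lf K δ ((α * z.1 + β * z.2) ^ 2 - z.1 ^ 2) := by
    refine (continuous_Lf hK).comp ?_
    exact (((continuous_const.mul continuous_fst).add
      (continuous_const.mul continuous_snd)).pow 2).sub (continuous_fst.pow 2)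
  refine Integrable.mono' hb hF.aestronglyMeasurable
    (Filter.Eventually.of_forall fun z => ?_)
  rw [Real.norm_eq_abs, abs_of_nonneg (Lf_nonneg hK _)]
  have h1 := Lf_le_add (δ := δ) hK ((α * z.1 + β * z.2) ^ 2 - z.1 ^ 2) 0
  rw [sub_zero] at h1
  have h2 : |(α * z.1 + β * z.2) ^ 2 - z.1 ^ 2| ≤ (α * z.1 + β * z.2) ^ 2 + z.1 ^ 2 := by
    rcases abs_cases ((α * z.1 + β * z.2) ^ 2 - z.1 ^ 2) with ⟨e, _⟩ | ⟨e, _⟩ <;>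
      rw [e] <;> nlinarith [sq_nonneg (α * z.1 + β * z.2), sq_nonneg z.1]
  linarith

theorem integrable_Lf_neg_sq (hK : IsGoodKernel K) :
    Integrable (fun z : ℝ × ℝ => Lf K δ (-(z.1 ^ 2)))
      ((gaussianReal 0 1).prod (gaussianReal 0 1)) := by
  refine (integrable_Lf2 (δ := δ) hK 0 0).congr
    (Filter.Eventually.of_forall fun z => ?_)
  show Lf K δ ((0 * z.1 + 0 * z.2) ^ 2 - z.1 ^ 2) = Lf K δ (-(z.1 ^ 2))
  norm_num

theorem main_est (hK : IsGoodKernel K) (hδ : 0 < δ) (α β : ℝ) :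
    (∫ z : ℝ × ℝ, Lf K δ ((α * z.1 + β * z.2) ^ 2 - z.1 ^ 2)
        ∂((gaussianReal 0 1).prod (gaussianReal 0 1)))
      ≤ (∫ z : ℝ × ℝ, Lf K δ (-(z.1 ^ 2)) ∂((gaussianReal 0 1).prod (gaussianReal 0 1)))
        - c0 K δ * ((gaussianReal 0 1 Sset).toReal ^ 2 * (α ^ 2 + β ^ 2))
        + ((1 + c0 K δ) * (α ^ 2 + β ^ 2)) * Jq (α ^ 2 + β ^ 2) := by
  have hc0 := c0_pos hK hδ
  have hpt : ∀ z : ℝ × ℝ,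
      Lf K δ ((α * z.1 + β * z.2) ^ 2 - z.1 ^ 2)
        ≤ Lf K δ (-(z.1 ^ 2))
          + ((-(c0 K δ)) * ((Sset ×ˢ (Set.univ : Set ℝ)).indicator
              (fun z => (α * z.1 + β * z.2) ^ 2) z)
            + ((1 + c0 K δ) * (α ^ 2 + β ^ 2)) * ((Bset (α ^ 2 + β ^ 2)).indicator qfun z)) := by
    intro z
    have hCS : (α * z.1 + β * z.2) ^ 2 ≤ (α ^ 2 + β ^ 2) * qfun z := by
      unfold qfun
      nlinarith [sq_nonneg (α * z.2 - β * z.1)]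
    have ht0 : 0 ≤ (α * z.1 + β * z.2) ^ 2 := sq_nonneg _
    have hq0 := qfun_nonneg z
    have hR0 : (0:ℝ) ≤ α ^ 2 + β ^ 2 := by positivity
    have hLip : Lf K δ ((α * z.1 + β * z.2) ^ 2 - z.1 ^ 2)
        ≤ Lf K δ (-(z.1 ^ 2)) + (α * z.1 + β * z.2) ^ 2 := by
      have h := Lf_le_add (δ := δ) hK ((α * z.1 + β * z.2) ^ 2 - z.1 ^ 2) (-(z.1 ^ 2))
      have he : |(α * z.1 + β * z.2) ^ 2 - z.1 ^ 2 - (-(z.1 ^ 2))|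
          = (α * z.1 + β * z.2) ^ 2 := by
        rw [show (α * z.1 + β * z.2) ^ 2 - z.1 ^ 2 - (-(z.1 ^ 2))
          = (α * z.1 + β * z.2) ^ 2 by ring, abs_of_nonneg ht0]
      rwa [he] at h
    by_cases hB : z ∈ Bset (α ^ 2 + β ^ 2)
    · rw [Set.indicator_of_mem hB]
      have hcb : c0 K δ * (α * z.1 + β * z.2) ^ 2
          ≤ c0 K δ * ((α ^ 2 + β ^ 2) * qfun z) :=
        mul_le_mul_of_nonneg_left hCS hc0.le
      by_cases hS : z ∈ Sset ×ˢ (Set.univ : Set ℝ)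
      · rw [Set.indicator_of_mem hS]
        nlinarith [hLip, hCS, hcb]
      · rw [Set.indicator_of_notMem hS]
        have hnn : 0 ≤ c0 K δ * ((α ^ 2 + β ^ 2) * qfun z) :=
          mul_nonneg hc0.le (mul_nonneg hR0 hq0)
        nlinarith [hLip, hCS]
    · rw [Set.indicator_of_notMem hB]
      have hnb : (α ^ 2 + β ^ 2) * qfun z ≤ z.1 ^ 2
          ∧ (α ^ 2 + β ^ 2) * qfun z ≤ 1 := by
        have h1 : ¬(z.1 ^ 2 < (α ^ 2 + β ^ 2) * qfun z
            ∨ 1 < (α ^ 2 + β ^ 2) * qfun z) := hB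
        push_neg at h1
        exact h1
      have ht1 : (α * z.1 + β * z.2) ^ 2 ≤ z.1 ^ 2 := le_trans hCS hnb.1
      have ht2 : (α * z.1 + β * z.2) ^ 2 ≤ 1 := le_trans hCS hnb.2
      have hn : Lf K δ (-(z.1 ^ 2)) = Lf K δ (z.1 ^ 2) := Lf_neg hK _
      by_cases hS : z ∈ Sset ×ˢ (Set.univ : Set ℝ)
      · rw [Set.indicator_of_mem hS]
        have hS1 : (1:ℝ) ≤ z.1 ^ 2 := hS.1
        have hk := key_step (δ := δ) hK ht0 ht2 hS1
        have hcomm : (α * z.1 + β * z.2) ^ 2 * c0 K δ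
            = c0 K δ * (α * z.1 + β * z.2) ^ 2 := mul_comm _ _
        linarith [hk, hn, hcomm]
      · rw [Set.indicator_of_notMem hS]
        have heq : Lf K δ ((α * z.1 + β * z.2) ^ 2 - z.1 ^ 2)
            = Lf K δ (z.1 ^ 2 - (α * z.1 + β * z.2) ^ 2) := by
          rw [show (α * z.1 + β * z.2) ^ 2 - z.1 ^ 2
            = -(z.1 ^ 2 - (α * z.1 + β * z.2) ^ 2) by ring, Lf_neg hK]
        have hm := Lf_mono (δ := δ) hK
          (a := z.1 ^ 2 - (α * z.1 + β * z.2) ^ 2) (b := z.1 ^ 2)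
          (by linarith) (by linarith)
        rw [heq]
        linarith [hm, hn]
  have hiL := integrable_Lf2 (δ := δ) hK α β
  have hiN := integrable_Lf_neg_sq (δ := δ) hK
  have hiI1 : Integrable (fun z : ℝ × ℝ => (-(c0 K δ))
      * ((Sset ×ˢ (Set.univ : Set ℝ)).indicator (fun z => (α * z.1 + β * z.2) ^ 2) z))
      ((gaussianReal 0 1).prod (gaussianReal 0 1)) :=
    ((integrable_t2 α β).indicator (measurableSet_Sset.prod MeasurableSet.univ)).const_mul _
  have hiI2 : Integrable (fun z : ℝ × ℝ => ((1 + c0 K δ) * (α ^ 2 + β ^ 2))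
      * ((Bset (α ^ 2 + β ^ 2)).indicator qfun z))
      ((gaussianReal 0 1).prod (gaussianReal 0 1)) :=
    (integrable_ind_qfun _).const_mul _
  have hsum : Integrable (fun z : ℝ × ℝ => (-(c0 K δ))
      * ((Sset ×ˢ (Set.univ : Set ℝ)).indicator (fun z => (α * z.1 + β * z.2) ^ 2) z)
      + ((1 + c0 K δ) * (α ^ 2 + β ^ 2)) * ((Bset (α ^ 2 + β ^ 2)).indicator qfun z))
      ((gaussianReal 0 1).prod (gaussianReal 0 1)) := hiI1.add hiI2
  have hRint : Integrable (fun z : ℝ × ℝ => Lf K δ (-(z.1 ^ 2))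
      + ((-(c0 K δ))
      * ((Sset ×ˢ (Set.univ : Set ℝ)).indicator (fun z => (α * z.1 + β * z.2) ^ 2) z)
      + ((1 + c0 K δ) * (α ^ 2 + β ^ 2)) * ((Bset (α ^ 2 + β ^ 2)).indicator qfun z)))
      ((gaussianReal 0 1).prod (gaussianReal 0 1)) := hiN.add hsum
  have hmono := integral_mono hiL hRint hpt
  rw [integral_add hiN hsum, integral_add hiI1 hiI2, integral_const_mul _ _,
    integral_const_mul _ _, integral_ind_t2] at hmono
  have hJ : (∫ z, (Bset (α ^ 2 + β ^ 2)).indicator qfun z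
      ∂((gaussianReal 0 1).prod (gaussianReal 0 1))) = Jq (α ^ 2 + β ^ 2) := rfl
  rw [hJ] at hmono
  have hP := gauss_Sset_pos
  have hP1 := gauss_Sset_le_one
  have hA : (gaussianReal 0 1 Sset).toReal ^ 2 * (α ^ 2 + β ^ 2)
      ≤ α ^ 2 * (∫ x, Sset.indicator (fun x => x ^ 2) x ∂gaussianReal 0 1)
        + β ^ 2 * ((gaussianReal 0 1 Sset).toReal * ∫ x, x ^ 2 ∂gaussianReal 0 1) := by
    have h1 := ind_sq_ge
    have h2 := sq_ge_ind
    have hPP : (gaussianReal 0 1 Sset).toReal ^ 2 ≤ (gaussianReal 0 1 Sset).toReal := by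
      nlinarith
    have hα1 := mul_le_mul_of_nonneg_left h1 (sq_nonneg α)
    have hα2 := mul_le_mul_of_nonneg_left hPP (sq_nonneg α)
    have hβ1 := mul_le_mul_of_nonneg_left
      (mul_le_mul_of_nonneg_left (h1.trans h2) hP.le) (sq_nonneg β)
    nlinarith [hα1, hα2, hβ1]
  have hB2 := mul_le_mul_of_nonneg_left hA hc0.le
  linarith [hmono, hB2]

end PopLocalMax


set_option maxHeartbeats 1000000 in
/-- For the population objective `G`: (a) `x⋆` and `-x⋆` are global
minimizers (hence local minima); (b) `0` is a local maximum. -/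
theorem population_global_minima_and_local_max_at_zero
    {p : ℕ} (hp : 3 ≤ p) (xs : EuclideanSpace ℝ (Fin p)) (hxs : ‖xs‖ = 1)
    (K : ℝ → ℝ) (hK : IsGoodKernel K) (δ : ℝ) (hδ : 0 < δ) :
    (∀ x : EuclideanSpace ℝ (Fin p), popObj K δ xs xs ≤ popObj K δ xs x) ∧
    (∀ x : EuclideanSpace ℝ (Fin p), popObj K δ xs (-xs) ≤ popObj K δ xs x) ∧
    IsLocalMin (popObj K δ xs) xs ∧ IsLocalMin (popObj K δ xs) (-xs) ∧
    IsLocalMax (popObj K δ xs) 0 := by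
  classical
  haveI := PopLocalMax.isProb_stdGaussian p
  have h0 : 0 < p := by omega
  have h1 : 1 < p := by omega
  set i0 : Fin p := ⟨0, h0⟩ with hi0
  set i1 : Fin p := ⟨1, h1⟩ with hi1
  have hij : i0 ≠ i1 := by
    intro h
    have := congrArg Fin.val h
    simp [hi0, hi1] at this
  -- 2D representation for every x
  have hrep : ∀ x : EuclideanSpace ℝ (Fin p), ∃ α β : ℝ, α ^ 2 + β ^ 2 = ‖x‖ ^ 2 ∧
      popObj K δ xs x = ∫ z : ℝ × ℝ, PopLocalMax.Lf K δ ((α * z.1 + β * z.2) ^ 2 - z.1 ^ 2)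
        ∂((gaussianReal 0 1).prod (gaussianReal 0 1)) := by
    intro x
    obtain ⟨b, α, β, hbi, hxe, hnorm⟩ :=
      PopLocalMax.exists_decomp i0 i1 hij xs hxs x
    refine ⟨α, β, hnorm, ?_⟩
    rw [hxe, ← hbi]
    exact PopLocalMax.popObj_eq hK hδ b i0 i1 hij α β
  -- value at xs and -xs
  have hxs_val : popObj K δ xs xs = PopLocalMax.Lf K δ 0 := by
    rw [popObj]
    have he : ∀ v : EuclideanSpace ℝ (Fin p),
        smoothedLoss K δ ((⟪v, xs⟫ : ℝ) ^ 2 - (⟪v, xs⟫ : ℝ) ^ 2) = PopLocalMax.Lf K δ 0 :=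
      fun v => by rw [sub_self, PopLocalMax.smoothedLoss_eq hK hδ]
    rw [integral_congr_ae (Filter.Eventually.of_forall he), integral_const,
      probReal_univ, one_smul]
  have hnegxs_val : popObj K δ xs (-xs) = PopLocalMax.Lf K δ 0 := by
    rw [popObj]
    have he : ∀ v : EuclideanSpace ℝ (Fin p),
        smoothedLoss K δ ((⟪v, -xs⟫ : ℝ) ^ 2 - (⟪v, xs⟫ : ℝ) ^ 2)
          = PopLocalMax.Lf K δ 0 := fun v => by
      rw [inner_neg_right, neg_sq, sub_self, PopLocalMax.smoothedLoss_eq hK hδ]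
    rw [integral_congr_ae (Filter.Eventually.of_forall he), integral_const,
      probReal_univ, one_smul]
  -- global lower bound
  have hlow : ∀ x : EuclideanSpace ℝ (Fin p), PopLocalMax.Lf K δ 0 ≤ popObj K δ xs x := by
    intro x
    obtain ⟨α, β, _, heq⟩ := hrep x
    rw [heq]
    have hm := integral_mono (μ := (gaussianReal 0 1).prod (gaussianReal 0 1))
      (integrable_const (PopLocalMax.Lf K δ 0))
      (PopLocalMax.integrable_Lf2 (δ := δ) hK α β)
      (fun z => PopLocalMax.Lf_zero_le hK _)
    rwa [integral_const, probReal_univ, one_smul] at hm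
  refine ⟨fun x => by rw [hxs_val]; exact hlow x,
    fun x => by rw [hnegxs_val]; exact hlow x,
    Filter.Eventually.of_forall fun y => by rw [hxs_val]; exact hlow y,
    Filter.Eventually.of_forall fun y => by rw [hnegxs_val]; exact hlow y,
    ?_⟩
  -- local max at 0
  have hc0 := PopLocalMax.c0_pos hK hδ
  have hc1 := PopLocalMax.c0_le_one (δ := δ) hK
  have hP := PopLocalMax.gauss_Sset_pos
  have hP1 := PopLocalMax.gauss_Sset_le_one
  set cP := (gaussianReal 0 1 PopLocalMax.Sset).toReal with hcP
  have hpos : 0 < PopLocalMax.c0 K δ * cP ^ 2 / (2 * (1 + PopLocalMax.c0 K δ)) := by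
    positivity
  obtain ⟨N, hN⟩ := (PopLocalMax.Jq_tendsto.eventually_lt_const hpos).exists
  have hr2 : (0:ℝ) < 1 / ((N : ℝ) + 1) := by positivity
  refine Metric.eventually_nhds_iff.mpr
    ⟨Real.sqrt (1 / ((N : ℝ) + 1)), Real.sqrt_pos.mpr hr2, fun x hx => ?_⟩
  have hxn : ‖x‖ ^ 2 ≤ 1 / ((N : ℝ) + 1) := by
    rw [dist_zero_right] at hx
    nlinarith [Real.sq_sqrt hr2.le, Real.sqrt_nonneg (1 / ((N : ℝ) + 1)), norm_nonneg x]
  obtain ⟨α, β, hn, heq⟩ := hrep x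
  -- value at 0
  obtain ⟨α0, β0, hn0, heq0⟩ := hrep 0
  rw [norm_zero] at hn0
  have hα0 : α0 = 0 := by
    have h2 : α0 ^ 2 = 0 := by nlinarith [sq_nonneg α0, sq_nonneg β0]
    exact pow_eq_zero_iff two_ne_zero |>.mp h2
  have hβ0 : β0 = 0 := by
    have h2 : β0 ^ 2 = 0 := by nlinarith [sq_nonneg α0, sq_nonneg β0]
    exact pow_eq_zero_iff two_ne_zero |>.mp h2
  have h0val : popObj K δ xs 0
      = ∫ z : ℝ × ℝ, PopLocalMax.Lf K δ (-(z.1 ^ 2))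
        ∂((gaussianReal 0 1).prod (gaussianReal 0 1)) := by
    rw [heq0, hα0, hβ0]
    refine integral_congr_ae (Filter.Eventually.of_forall fun z => ?_)
    show PopLocalMax.Lf K δ ((0 * z.1 + 0 * z.2) ^ 2 - z.1 ^ 2)
        = PopLocalMax.Lf K δ (-(z.1 ^ 2))
    norm_num
  rw [heq, h0val]
  have hest := PopLocalMax.main_est hK hδ α β
  have hR : α ^ 2 + β ^ 2 ≤ 1 / ((N : ℝ) + 1) := by rw [hn]; exact hxn
  have hJm : PopLocalMax.Jq (α ^ 2 + β ^ 2) ≤ PopLocalMax.Jq (1 / ((N : ℝ) + 1)) :=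
    PopLocalMax.Jq_mono hR
  have hJsmall : PopLocalMax.Jq (α ^ 2 + β ^ 2)
      ≤ PopLocalMax.c0 K δ * cP ^ 2 / (2 * (1 + PopLocalMax.c0 K δ)) :=
    le_of_lt (lt_of_le_of_lt hJm hN)
  have hR0 : (0:ℝ) ≤ α ^ 2 + β ^ 2 := by positivity
  have hcc : ((1 + PopLocalMax.c0 K δ) * (α ^ 2 + β ^ 2)) * PopLocalMax.Jq (α ^ 2 + β ^ 2)
      ≤ PopLocalMax.c0 K δ * (cP ^ 2 * (α ^ 2 + β ^ 2)) := by
    have hfac : (0:ℝ) ≤ (1 + PopLocalMax.c0 K δ) * (α ^ 2 + β ^ 2) := by positivity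
    calc ((1 + PopLocalMax.c0 K δ) * (α ^ 2 + β ^ 2)) * PopLocalMax.Jq (α ^ 2 + β ^ 2)
        ≤ ((1 + PopLocalMax.c0 K δ) * (α ^ 2 + β ^ 2))
          * (PopLocalMax.c0 K δ * cP ^ 2 / (2 * (1 + PopLocalMax.c0 K δ))) :=
          mul_le_mul_of_nonneg_left hJsmall hfac
      _ = PopLocalMax.c0 K δ * cP ^ 2 * (α ^ 2 + β ^ 2) / 2 := by
          field_simp
      _ ≤ PopLocalMax.c0 K δ * (cP ^ 2 * (α ^ 2 + β ^ 2)) := by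
          nlinarith [mul_nonneg (mul_nonneg hc0.le (sq_nonneg cP)) hR0]
  linarith [hest, hcc]
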